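/- Supermodularity of fair exchange in total-data coordinates: fix an agent i, and let A, B, C, D be nonnegative collection profiles whose total-data vectors satisfy: t_j(A) = t_j(B) and t_j(C) = t_j(D) for all j ≠ i; t_j(A) ≤ t_j(C) for all j ≠ i; t_i(A) = t_i(C), t_i(B) = t_i(D), and t_i(A) ≤ t_i(B). Then the own collections satisfy the decreasing-differences inequality D i − C i ≤ B i − A i, and consequently agent i's utility has increasing differences: U_i(D) − U_i(C) ≥ U_i(B) − U_i(A). -/

import Mathlib

open Finset

/-- Agent `i`'s total accessible data under fair exchange. -/
noncomputable def total {n : ℕ} (X : Fin n → ℝ) (i : Fin n) : ℝ :=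
  X i + ∑ j ∈ univ.filter (fun j => j ≠ i), min (X i) (X j)

/-- Agent `i`'s utility. -/
noncomputable def U {n : ℕ} (b : Fin n → ℝ → ℝ) (c : Fin n → ℝ)
    (X : Fin n → ℝ) (i : Fin n) : ℝ :=
  b i (total X i) - c i * X i

lemma total_eq_sum {n : ℕ} (X : Fin n → ℝ) (i : Fin n) :
    total X i = ∑ j, min (X i) (X j) := by
  rw [total, Finset.filter_ne']
  simpa using (Finset.add_sum_erase univ (fun j => min (X i) (X j)) (mem_univ i)).symm

lemma total_mono {n : ℕ} (X : Fin n → ℝ) {j k : Fin n} (h : X j ≤ X k) :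
    total X j ≤ total X k := by
  rw [total_eq_sum, total_eq_sum]
  exact Finset.sum_le_sum fun m _ => min_le_min h le_rfl

lemma total_strict_mono {n : ℕ} (X : Fin n → ℝ) {j k : Fin n} (h : X j < X k) :
    total X j < total X k := by
  rw [total_eq_sum, total_eq_sum]
  refine Finset.sum_lt_sum (fun m _ => min_le_min h.le le_rfl) ⟨k, mem_univ k, ?_⟩
  rw [min_self]
  exact lt_of_le_of_lt (min_le_left _ _) h

lemma total_lt_iff {n : ℕ} (X : Fin n → ℝ) {j k : Fin n} :
    total X j < total X k ↔ X j < X k := by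
  constructor
  · intro h
    by_contra h'
    exact absurd (total_mono X (not_lt.1 h')) (not_le.2 h)
  · exact total_strict_mono X

lemma total_nonneg {n : ℕ} (X : Fin n → ℝ) (hX : ∀ j, 0 ≤ X j) (i : Fin n) :
    0 ≤ total X i := by
  rw [total_eq_sum]
  exact Finset.sum_nonneg fun j _ => le_min (hX i) (hX j)

/-- The reciprocal step function whose integral recovers collections from totals. -/
noncomputable def stepF {n : ℕ} (s : Finset (Fin n)) (t : Fin n → ℝ) (σ : ℝ) : ℝ :=
  ((n : ℝ) - ((s.filter (fun j => t j < σ)).card : ℝ))⁻¹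

lemma stepF_measurable {n : ℕ} (s : Finset (Fin n)) (t : Fin n → ℝ) :
    Measurable (stepF s t) := by
  have h3 : (fun σ : ℝ => (((s.filter (fun j => t j < σ)).card : ℝ)))
      = fun σ => ∑ j ∈ s, if t j < σ then (1:ℝ) else 0 := by
    funext σ
    rw [Finset.card_filter]
    push_cast
    rfl
  have h2 : Measurable (fun σ : ℝ => ∑ j ∈ s, if t j < σ then (1:ℝ) else 0) := by
    apply Finset.measurable_sum
    intro j _
    exact Measurable.ite measurableSet_Ioi measurable_const measurable_const
  unfold stepF
  exact (measurable_const.sub (h3 ▸ h2)).inv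

lemma card_le_n {n : ℕ} (s : Finset (Fin n)) : s.card ≤ n := by
  simpa using Finset.card_le_univ s

lemma stepF_nonneg {n : ℕ} (s : Finset (Fin n)) (t : Fin n → ℝ) (σ : ℝ) :
    0 ≤ stepF s t σ := by
  unfold stepF
  apply inv_nonneg.2
  have h : ((s.filter (fun j => t j < σ)).card : ℝ) ≤ n := by
    exact_mod_cast le_trans (Finset.card_filter_le s _) (card_le_n s)
  linarith

lemma stepF_le_one {n : ℕ} (s : Finset (Fin n)) (t : Fin n → ℝ) (σ : ℝ) :
    stepF s t σ ≤ 1 := by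
  unfold stepF
  have hkn : (s.filter (fun j => t j < σ)).card ≤ n :=
    le_trans (Finset.card_filter_le s _) (card_le_n s)
  rw [← Nat.cast_sub hkn]
  rcases Nat.eq_zero_or_pos (n - (s.filter (fun j => t j < σ)).card) with h | h
  · simp [h]
  · apply inv_le_one_of_one_le₀
    exact_mod_cast h

lemma stepF_intInt {n : ℕ} (s : Finset (Fin n)) (t : Fin n → ℝ) (a b : ℝ) :
    IntervalIntegrable (stepF s t) MeasureTheory.volume a b := by
  rw [intervalIntegrable_iff]
  apply MeasureTheory.Measure.integrableOn_of_bounded (M := 1)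
  · rw [Set.uIoc]
    exact ne_of_lt measure_Ioc_lt_top
  · exact (stepF_measurable s t).aestronglyMeasurable
  · apply Filter.Eventually.of_forall
    intro x
    rw [Real.norm_eq_abs, abs_of_nonneg (stepF_nonneg s t x)]
    exact stepF_le_one s t x

/-- The fundamental formula: each collection is recovered from the totals vector by
integrating the reciprocal of `n` minus the number of agents with strictly smaller total. -/
lemma own_eq_integral {n : ℕ} (X : Fin n → ℝ) (hX : ∀ j, 0 ≤ X j) (i : Fin n) :
    X i = ∫ σ in (0:ℝ)..(total X i), stepF univ (total X) σ := by
  suffices H : ∀ k : ℕ, ∀ i : Fin n, (univ.filter (fun j => X j < X i)).card = k →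
      X i = ∫ σ in (0:ℝ)..(total X i), stepF univ (total X) σ from H _ i rfl
  intro k
  induction k using Nat.strong_induction_on with
  | _ k IH =>
  intro i hk
  have hn : 0 < n := i.pos
  rcases Nat.eq_zero_or_pos k with h0 | hkpos
  · -- base case: i has a minimal collection
    have hemp : univ.filter (fun j => X j < X i) = ∅ := by
      rw [← Finset.card_eq_zero, hk, h0]
    have hmin : ∀ j, X i ≤ X j := by
      intro j
      by_contra hcon
      have : j ∈ univ.filter (fun j => X j < X i) := by
        simp [not_le.1 hcon]
      rw [hemp] at this
      exact absurd this (Finset.notMem_empty j)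
    have hti : total X i = n * X i := by
      rw [total_eq_sum]
      rw [Finset.sum_congr rfl (fun j _ => min_eq_left (hmin j))]
      rw [Finset.sum_const, Finset.card_univ, Fintype.card_fin, nsmul_eq_mul]
    have h0t : (0:ℝ) ≤ total X i := total_nonneg X hX i
    have hcongr : ∀ σ ∈ Set.uIoc (0:ℝ) (total X i), stepF univ (total X) σ = (n:ℝ)⁻¹ := by
      intro σ hσ
      rw [Set.uIoc_of_le h0t] at hσ
      unfold stepF
      have hfe : univ.filter (fun j => total X j < σ) = ∅ := by
        rw [Finset.filter_eq_empty_iff]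
        intro j _ hlt
        have : total X j < total X i := lt_of_lt_of_le hlt hσ.2
        have : X j < X i := (total_lt_iff X).1 this
        exact absurd this (not_lt.2 (hmin j))
      rw [hfe]
      simp
    rw [intervalIntegral.integral_congr_ae (Filter.Eventually.of_forall hcongr),
      intervalIntegral.integral_const, hti, smul_eq_mul]
    have hnne : (n:ℝ) ≠ 0 := by positivity
    field_simp
    simp
  · -- inductive step
    have hS : (univ.filter (fun j => X j < X i)).Nonempty := by
      rw [← Finset.card_pos, hk]; exact hkpos
    obtain ⟨js, hjS, hjmax⟩ := Finset.exists_max_image _ X hS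
    have hji : X js < X i := (Finset.mem_filter.1 hjS).2
    have hcard : (univ.filter (fun j => X j < X js)).card < k := by
      have hsub : univ.filter (fun j => X j < X js) ⊆
          (univ.filter (fun j => X j < X i)).erase js := by
        intro m hm
        have hm' : X m < X js := (Finset.mem_filter.1 hm).2
        apply Finset.mem_erase.2
        refine ⟨fun heq => absurd (heq ▸ hm') (lt_irrefl _), ?_⟩
        exact Finset.mem_filter.2 ⟨Finset.mem_univ m, lt_trans hm' hji⟩
      calc (univ.filter (fun j => X j < X js)).card
          ≤ ((univ.filter (fun j => X j < X i)).erase js).card := Finset.card_le_card hsub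
        _ < k := by
            rw [Finset.card_erase_of_mem hjS, hk]
            exact Nat.pred_lt hkpos.ne'
    have IHj : X js = ∫ σ in (0:ℝ)..(total X js), stepF univ (total X) σ := IH _ hcard js rfl
    have hkn : k < n := by
      rw [← hk]
      have hsub : univ.filter (fun j => X j < X i) ⊆ univ.erase i := by
        intro m hm
        apply Finset.mem_erase.2
        exact ⟨fun heq => absurd (heq ▸ (Finset.mem_filter.1 hm).2) (lt_irrefl _),
          Finset.mem_univ m⟩
      calc (univ.filter (fun j => X j < X i)).card
          ≤ (univ.erase i).card := Finset.card_le_card hsub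
        _ = n - 1 := by rw [Finset.card_erase_of_mem (Finset.mem_univ i), Finset.card_univ,
            Fintype.card_fin]
        _ < n := by omega
    have hnk : (0:ℝ) < (n:ℝ) - k := by
      have : (k:ℝ) < n := by exact_mod_cast hkn
      linarith
    -- algebraic identity
    have hdiff : total X i - total X js = ((n:ℝ) - k) * (X i - X js) := by
      rw [total_eq_sum, total_eq_sum, ← Finset.sum_sub_distrib]
      have hterm : ∀ j : Fin n, min (X i) (X j) - min (X js) (X j) =
          if X j < X i then 0 else X i - X js := by
        intro j
        by_cases hj : X j < X i
        · have hj' : X j ≤ X js := hjmax j (Finset.mem_filter.2 ⟨Finset.mem_univ j, hj⟩)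
          rw [if_pos hj, min_eq_right hj.le, min_eq_right hj', sub_self]
        · have hij : X i ≤ X j := not_lt.1 hj
          rw [if_neg hj, min_eq_left hij, min_eq_left (le_trans hji.le hij)]
      rw [Finset.sum_congr rfl (fun j _ => hterm j), Finset.sum_ite]
      rw [Finset.sum_const_zero, zero_add, Finset.sum_const, nsmul_eq_mul]
      have hcards : (univ.filter (fun j => X j < X i)).card
          + (univ.filter (fun j => ¬ X j < X i)).card = n := by
        simpa using Finset.card_filter_add_card_filter_not
          (s := (univ : Finset (Fin n))) (p := fun j => X j < X i)
      rw [hk] at hcards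
      have : (univ.filter (fun j => ¬ X j < X i)).card = n - k := by omega
      rw [this, Nat.cast_sub hkn.le]
    have htji : total X js < total X i := total_strict_mono X hji
    have hcongr : ∀ σ ∈ Set.uIoc (total X js) (total X i),
        stepF univ (total X) σ = ((n:ℝ) - k)⁻¹ := by
      intro σ hσ
      rw [Set.uIoc_of_le htji.le] at hσ
      unfold stepF
      have hfe : univ.filter (fun j => total X j < σ) = univ.filter (fun j => X j < X i) := by
        ext m
        simp only [Finset.mem_filter, Finset.mem_univ, true_and]
        constructor
        · intro hm
          exact (total_lt_iff X).1 (lt_of_lt_of_le hm hσ.2)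
        · intro hm
          have hm' : X m ≤ X js := hjmax m (Finset.mem_filter.2 ⟨Finset.mem_univ m, hm⟩)
          exact lt_of_le_of_lt (total_mono X hm') hσ.1
      rw [hfe, hk]
    have I1 := stepF_intInt (univ : Finset (Fin n)) (total X) 0 (total X js)
    have I2 := stepF_intInt (univ : Finset (Fin n)) (total X) (total X js) (total X i)
    rw [← intervalIntegral.integral_add_adjacent_intervals I1 I2, ← IHj,
      intervalIntegral.integral_congr_ae (Filter.Eventually.of_forall hcongr),
      intervalIntegral.integral_const, smul_eq_mul, hdiff, mul_comm ((n:ℝ) - k),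
      mul_assoc, mul_inv_cancel₀ hnk.ne', mul_one]
    ring

/-- Difference of own collections when others' totals agree. -/
lemma diff_eq_integral {n : ℕ} (X Y : Fin n → ℝ) (hX : ∀ j, 0 ≤ X j) (hY : ∀ j, 0 ≤ Y j)
    (i : Fin n) (hXY : ∀ j, j ≠ i → total X j = total Y j)
    (hle : total X i ≤ total Y i) :
    Y i - X i = ∫ σ in (total X i)..(total Y i), stepF (univ.erase i) (total X) σ := by
  have hXi := own_eq_integral X hX i
  have hYi := own_eq_integral Y hY i
  have h0X : (0:ℝ) ≤ total X i := total_nonneg X hX i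
  have h0Y : (0:ℝ) ≤ total Y i := total_nonneg Y hY i
  have e1 : (∫ σ in (0:ℝ)..(total X i), stepF univ (total X) σ)
      = ∫ σ in (0:ℝ)..(total X i), stepF (univ.erase i) (total X) σ := by
    apply intervalIntegral.integral_congr_ae (Filter.Eventually.of_forall ?_)
    intro σ hσ
    rw [Set.uIoc_of_le h0X] at hσ
    unfold stepF
    have hfe : univ.filter (fun j => total X j < σ)
        = (univ.erase i).filter (fun j => total X j < σ) := by
      ext m
      simp only [Finset.mem_filter, Finset.mem_univ, true_and, Finset.mem_erase]
      constructor
      · intro hm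
        refine ⟨⟨?_, trivial⟩, hm⟩
        intro heq
        rw [heq] at hm
        exact absurd hσ.2 (not_le.2 hm)
      · exact fun hm => hm.2
    rw [hfe]
  have e2 : (∫ σ in (0:ℝ)..(total Y i), stepF univ (total Y) σ)
      = ∫ σ in (0:ℝ)..(total Y i), stepF (univ.erase i) (total X) σ := by
    apply intervalIntegral.integral_congr_ae (Filter.Eventually.of_forall ?_)
    intro σ hσ
    rw [Set.uIoc_of_le h0Y] at hσ
    unfold stepF
    have hfe : univ.filter (fun j => total Y j < σ)
        = (univ.erase i).filter (fun j => total X j < σ) := by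
      ext m
      simp only [Finset.mem_filter, Finset.mem_univ, true_and, Finset.mem_erase]
      constructor
      · intro hm
        have hmi : m ≠ i := by
          intro heq
          rw [heq] at hm
          exact absurd hσ.2 (not_le.2 hm)
        exact ⟨⟨hmi, trivial⟩, by rw [hXY m hmi]; exact hm⟩
      · intro hm
        have hmi : m ≠ i := hm.1.1
        rw [← hXY m hmi]
        exact hm.2
    rw [hfe]
  have I1 := stepF_intInt (univ.erase i) (total X) 0 (total X i)
  have I2 := stepF_intInt (univ.erase i) (total X) (total X i) (total Y i)
  have hadd := intervalIntegral.integral_add_adjacent_intervals I1 I2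
  rw [hXi, hYi, e1, e2, ← hadd]
  ring

/-- Supermodularity of fair exchange in total-data coordinates: the own collection has
decreasing differences in (own total, others' totals), and consequently utility has
increasing differences. -/
theorem supermodular_total_coordinates (n : ℕ) (b : Fin n → ℝ → ℝ) (c : Fin n → ℝ)
    (hc : ∀ i, 0 < c i)
    (hbc : ∀ i, ContinuousOn (b i) (Set.Ici 0))
    (hbm : ∀ i, MonotoneOn (b i) (Set.Ici 0))
    (hbconc : ∀ i, ConcaveOn ℝ (Set.Ici 0) (b i))
    (i : Fin n)
    (A B C D : Fin n → ℝ)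
    (hA : ∀ j, 0 ≤ A j) (hB : ∀ j, 0 ≤ B j) (hC : ∀ j, 0 ≤ C j) (hD : ∀ j, 0 ≤ D j)
    (hAB : ∀ j, j ≠ i → total A j = total B j)
    (hCD : ∀ j, j ≠ i → total C j = total D j)
    (hAC : ∀ j, j ≠ i → total A j ≤ total C j)
    (hiAC : total A i = total C i)
    (hiBD : total B i = total D i)
    (hiAB : total A i ≤ total B i) :
    D i - C i ≤ B i - A i ∧
      U b c B i - U b c A i ≤ U b c D i - U b c C i := by
  have hn : 0 < n := i.pos
  have hd1 : B i - A i = ∫ σ in (total A i)..(total B i), stepF (univ.erase i) (total A) σ :=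
    diff_eq_integral A B hA hB i hAB hiAB
  have hiCD : total C i ≤ total D i := by rw [← hiAC, ← hiBD]; exact hiAB
  have hd2 : D i - C i = ∫ σ in (total C i)..(total D i), stepF (univ.erase i) (total C) σ :=
    diff_eq_integral C D hC hD i hCD hiCD
  rw [← hiAC, ← hiBD] at hd2
  have hmono : (∫ σ in (total A i)..(total B i), stepF (univ.erase i) (total C) σ)
      ≤ ∫ σ in (total A i)..(total B i), stepF (univ.erase i) (total A) σ := by
    apply intervalIntegral.integral_mono_on hiAB (stepF_intInt _ _ _ _) (stepF_intInt _ _ _ _)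
    intro σ _
    unfold stepF
    have hsub : (univ.erase i).filter (fun j => total C j < σ) ⊆
        (univ.erase i).filter (fun j => total A j < σ) := by
      intro m hm
      obtain ⟨hme, hmlt⟩ := Finset.mem_filter.1 hm
      exact Finset.mem_filter.2 ⟨hme,
        lt_of_le_of_lt (hAC m (Finset.mem_erase.1 hme).1) hmlt⟩
    have hcardA : ((univ.erase i).filter (fun j => total A j < σ)).card ≤ n - 1 := by
      calc ((univ.erase i).filter (fun j => total A j < σ)).card
          ≤ (univ.erase i).card := Finset.card_filter_le _ _
        _ = n - 1 := by
            rw [Finset.card_erase_of_mem (Finset.mem_univ i), Finset.card_univ, Fintype.card_fin]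
    have hposA : (0:ℝ) < (n:ℝ) - ((univ.erase i).filter (fun j => total A j < σ)).card := by
      have h1 : (((univ.erase i).filter (fun j => total A j < σ)).card : ℝ) ≤ (n:ℝ) - 1 := by
        have := hcardA
        have hcast : (((univ.erase i).filter (fun j => total A j < σ)).card : ℝ) ≤ ((n-1 : ℕ) : ℝ) := by
          exact_mod_cast this
        calc (((univ.erase i).filter (fun j => total A j < σ)).card : ℝ)
            ≤ ((n-1 : ℕ) : ℝ) := hcast
          _ ≤ (n:ℝ) - 1 := by
              rw [Nat.cast_sub hn]
              simp
      linarith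
    apply inv_anti₀ hposA
    have : (((univ.erase i).filter (fun j => total C j < σ)).card : ℝ)
        ≤ ((univ.erase i).filter (fun j => total A j < σ)).card := by
      exact_mod_cast Finset.card_le_card hsub
    linarith
  have hmain : D i - C i ≤ B i - A i := by
    rw [hd1, hd2]
    exact hmono
  refine ⟨hmain, ?_⟩
  unfold U
  rw [← hiAC, ← hiBD]
  have hmul : c i * (D i - C i) ≤ c i * (B i - A i) :=
    mul_le_mul_of_nonneg_left hmain (hc i).le
  nlinarith [hmul]
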